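/- arXiv:1609.00299 — 2 statements merged into one kernel-verified Lean document; each statement's English description precedes it below -/
import Mathlib

section
/- Let p be a prime, d a positive integer, e = 1 + 2·ν_p(d), and suppose c ∈ ℤ_p (the p-adic integers) satisfies c ≡ x₁^d + x₂^d + ⋯ + x_ℓ^d (mod p^e) for some x₁,…,x_ℓ ∈ ℤ_p with x₁ a unit. Then there exist y₁,…,y_ℓ ∈ ℤ_p with c = y₁^d + ⋯ + y_ℓ^d. -/
/-- Hensel lifting for sums of `ℓ` `d`-th powers in `ℤ_p`: if `c` is congruent
modulo `p^e`, `e = 1 + 2ν_p(d)`, to a sum of `d`-th powers with one of the bases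
a unit, then `c` is exactly a sum of `ℓ` `d`-th powers in `ℤ_p`. -/
theorem sum_pow_lift (p : ℕ) [Fact p.Prime] (d : ℕ) (hd : 0 < d)
    (ℓ : ℕ) (c : ℤ_[p]) (x : Fin ℓ → ℤ_[p]) (i₀ : Fin ℓ) (hx : IsUnit (x i₀))
    (hc : (p : ℤ_[p]) ^ (1 + 2 * padicValNat p d) ∣ (c - ∑ i, x i ^ d)) :
    ∃ y : Fin ℓ → ℤ_[p], c = ∑ i, y i ^ d := by
  classical
  set v := padicValNat p d with hv
  set a := x i₀ with ha
  set b : ℤ_[p] := c - ∑ i ∈ Finset.univ.erase i₀, x i ^ d with hb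
  set F : Polynomial ℤ_[p] := Polynomial.X ^ d - Polynomial.C b with hF
  have hsum : (∑ i, x i ^ d) = a ^ d + ∑ i ∈ Finset.univ.erase i₀, x i ^ d := by
    rw [← Finset.add_sum_erase _ _ (Finset.mem_univ i₀)]
  have hFeval : F.eval a = -(c - ∑ i, x i ^ d) := by
    have h1 : F.eval a = a ^ d - b := by
      simp only [hF, Polynomial.eval_sub, Polynomial.eval_pow, Polynomial.eval_X,
        Polynomial.eval_C]
    rw [h1, hb, hsum]; ring
  have hderiv : F.derivative.eval a = (d : ℤ_[p]) * a ^ (d - 1) := by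
    simp [hF, Polynomial.derivative_X_pow]
  have hna : ‖a‖ = 1 := PadicInt.isUnit_iff.mp hx
  have hdz : (d : ℚ_[p]) ≠ 0 := by
    exact Nat.cast_ne_zero.mpr hd.ne'
  have hdnorm : ‖(d : ℤ_[p])‖ = (p : ℝ) ^ (-(v : ℤ)) := by
    rw [PadicInt.norm_def]
    push_cast
    rw [Padic.norm_eq_zpow_neg_valuation hdz, Padic.valuation_natCast]
  have hderivnorm : ‖F.derivative.eval a‖ = (p : ℝ) ^ (-(v : ℤ)) := by
    rw [hderiv, norm_mul, norm_pow, hna, one_pow, mul_one, hdnorm]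
  have hp1 : (1 : ℝ) < (p : ℝ) := by
    exact_mod_cast (Fact.out : p.Prime).one_lt
  have hevalnorm : ‖F.eval a‖ ≤ (p : ℝ) ^ (-(1 + 2 * v : ℕ) : ℤ) := by
    rw [hFeval, norm_neg]
    rw [PadicInt.norm_le_pow_iff_mem_span_pow, Ideal.mem_span_singleton]
    exact hc
  have hnorm : ‖F.eval a‖ < ‖F.derivative.eval a‖ ^ 2 := by
    rw [hderivnorm, ← zpow_natCast ((p:ℝ) ^ (-(v:ℤ))), ← zpow_mul]
    refine hevalnorm.trans_lt ?_
    rw [zpow_lt_zpow_iff_right₀ hp1]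
    push_cast; omega
  obtain ⟨z, hz, -, -, -⟩ := hensels_lemma hnorm
  refine ⟨Function.update x i₀ z, ?_⟩
  have hzd : z ^ d = b := by
    have := hz
    simp only [hF, Polynomial.coe_aeval_eq_eval, Polynomial.eval_sub, Polynomial.eval_pow, Polynomial.eval_X,
      Polynomial.eval_C, sub_eq_zero] at this
    exact this
  rw [← Finset.add_sum_erase _ _ (Finset.mem_univ i₀), Function.update_self, hzd, hb]
  have : ∑ i ∈ Finset.univ.erase i₀, Function.update x i₀ z i ^ d
      = ∑ i ∈ Finset.univ.erase i₀, x i ^ d := by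
    refine Finset.sum_congr rfl fun i hi => ?_
    rw [Function.update_of_ne (Finset.ne_of_mem_erase hi)]
  rw [this]; ring
end

section
/- For e ≥ 1 and n > e + 2, an odd integer a satisfies: the congruence x^(2^e) ≡ a (mod 2^n) has a solution if and only if a ≡ 1 (mod 2^(e+2)). -/
lemma two_nilpotent (k : ℕ) : IsNilpotent (2 : ZMod (2^k)) := by
  refine ⟨k, ?_⟩
  have : ((2:ℕ) : ZMod (2^k))^k = ((2^k : ℕ) : ZMod (2^k)) := by push_cast; ring
  simpa using this.trans (ZMod.natCast_self _)

lemma surj_aux (e k : ℕ) (he : 1 ≤ e) (v : ℤ) :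
    ∃ u : ℤ, (u + 2^e * u^2) ≡ v [ZMOD ((2:ℕ)^k : ℕ)] := by
  haveI : NeZero ((2:ℕ)^k) := ⟨pow_ne_zero _ two_ne_zero⟩
  have hinj : Function.Injective (fun z : ZMod (2^k) => z + 2^e * z^2) := by
    intro z1 z2 h
    simp only at h
    have h2 : (z1 - z2) * (1 + 2^e * (z1 + z2)) = 0 := by linear_combination h
    have hnil : IsNilpotent ((2:ZMod (2^k))^e * (z1 + z2)) := by
      obtain ⟨e, rfl⟩ := Nat.exists_eq_add_of_le he
      have h2n := two_nilpotent k
      have : (2:ZMod (2^k))^(1+e) * (z1 + z2) = 2 * (2^e * (z1+z2)) := by ring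
      rw [this]
      exact (Commute.all _ _).isNilpotent_mul_right h2n
    have hu : IsUnit (1 + (2:ZMod (2^k))^e * (z1 + z2)) := hnil.isUnit_one_add
    have := (hu.mul_left_eq_zero).mp h2
    exact sub_eq_zero.mp this
  have hsurj := Finite.injective_iff_surjective.mp hinj
  obtain ⟨z, hz⟩ := hsurj (v : ZMod (2^k))
  refine ⟨(z.val : ℤ), ?_⟩
  rw [← ZMod.intCast_eq_intCast_iff]
  push_cast
  simpa using hz

/-- square-root lifting -/
lemma sq_lift (e n : ℕ) (he : 1 ≤ e) (a : ℤ) (ha : a ≡ 1 [ZMOD (2:ℤ)^(e+2)]) :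
    ∃ y : ℤ, y ≡ 1 [ZMOD (2:ℤ)^(e+1)] ∧ y^2 ≡ a [ZMOD (2:ℤ)^n] := by
  rcases le_or_gt n (e+2) with h | h
  · refine ⟨1, Int.ModEq.refl _, ?_⟩
    have hd : ((2:ℤ)^n) ∣ (2:ℤ)^(e+2) := pow_dvd_pow _ h
    calc (1:ℤ)^2 = 1 := one_pow 2
    _ ≡ a [ZMOD (2:ℤ)^n] := ((ha.symm).of_dvd hd)
  · set k := n - (e+2) with hk
    have hn : n = (e+2) + k := by omega
    obtain ⟨v, hv⟩ := (Int.modEq_iff_dvd.mp ha.symm)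
    -- hv : a - 1 = 2^(e+2) * v
    obtain ⟨u, hu⟩ := surj_aux e k he v
    have hud : ((2:ℤ)^k) ∣ (v - (u + 2^e*u^2)) := by
      have := Int.modEq_iff_dvd.mp hu
      simpa [Nat.cast_pow] using this
    obtain ⟨w, hw⟩ := hud
    refine ⟨1 + 2^(e+1)*u, ?_, ?_⟩
    · rw [Int.ModEq]
      simp [Int.add_mul_emod_self_left]
    · rw [Int.modEq_iff_dvd, hn]
      refine ⟨w, ?_⟩
      have ha1 : a = 1 + 2^(e+2)*v := by linarith [hv]
      rw [ha1]
      linear_combination (2:ℤ)^(e+2)*hw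

/-- backward direction -/
lemma exists_pow_root (e : ℕ) (he : 1 ≤ e) :
    ∀ n : ℕ, ∀ a : ℤ, a ≡ 1 [ZMOD (2:ℤ)^(e+2)] →
      ∃ x : ℤ, x^(2^e) ≡ a [ZMOD (2:ℤ)^n] := by
  induction e, he using Nat.le_induction with
  | base =>
    intro n a ha
    obtain ⟨y, _, hy⟩ := sq_lift 1 n le_rfl a ha
    exact ⟨y, by simpa using hy⟩
  | succ e he ih =>
    intro n a ha
    obtain ⟨y, hy1, hy2⟩ := sq_lift (e+1) n (by omega) a ha
    obtain ⟨x, hx⟩ := ih n y (by simpa using hy1)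
    refine ⟨x, ?_⟩
    have hxx : x^(2^(e+1)) = (x^(2^e))^2 := by rw [pow_succ, pow_mul]
    rw [hxx]
    exact (hx.pow 2).trans hy2

/-- forward lemma: odd x → x^(2^e) ≡ 1 mod 2^(e+2) -/
lemma odd_pow_cong (e : ℕ) (he : 1 ≤ e) (x : ℤ) (hx : Odd x) :
    x ^ (2^e) ≡ 1 [ZMOD (2:ℤ)^(e+2)] := by
  induction e, he using Nat.le_induction with
  | base =>
    obtain ⟨k, rfl⟩ := hx
    obtain ⟨m, hm⟩ := Int.even_mul_succ_self k
    apply Int.ModEq.symm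
    rw [Int.modEq_iff_dvd]
    exact ⟨m, by push_cast; linear_combination 4*hm⟩
  | succ e he ih =>
    obtain ⟨t, ht⟩ := Int.modEq_iff_dvd.mp ih.symm
    have hs : x^(2^e) = 1 + 2^(e+2)*t := by linarith
    apply Int.ModEq.symm
    rw [Int.modEq_iff_dvd]
    refine ⟨t*(2^(e+1)*t+1), ?_⟩
    have hxx : x^(2^(e+1)) = (x^(2^e))^2 := by rw [pow_succ, pow_mul]
    rw [hxx, hs]; ring

/-- For `e ≥ 1` and `n > e + 2`, an odd integer `a` is a `2^e`-th power
modulo `2^n` iff `a ≡ 1 (mod 2^(e+2))`. -/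
theorem pow_two_pow_mod_large (e n : ℕ) (he : 1 ≤ e) (hn : e + 2 < n)
    (a : ℤ) (ha : Odd a) :
    (∃ x : ZMod (2 ^ n), x ^ (2 ^ e) = (a : ZMod (2 ^ n))) ↔
      a ≡ 1 [ZMOD (2 : ℤ) ^ (e + 2)] := by
  haveI : NeZero ((2:ℕ)^n) := ⟨pow_ne_zero _ two_ne_zero⟩
  constructor
  · rintro ⟨x, hx⟩
    set b : ℤ := (x.val : ℤ) with hb
    have hcast : ((b : ZMod (2^n))) = x := by
      simp [hb, ZMod.natCast_val, ZMod.intCast_cast]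
    have hmod : b^(2^e) ≡ a [ZMOD ((2:ℕ)^n : ℕ)] := by
      rw [← ZMod.intCast_eq_intCast_iff]
      push_cast
      rw [hcast]
      exact hx
    have hmod' : b^(2^e) ≡ a [ZMOD (2:ℤ)^n] := by simpa [Nat.cast_pow] using hmod
    have hbodd : Odd b := by
      by_contra hodd
      rw [Int.not_odd_iff_even] at hodd
      have h2 : (2:ℤ) ∣ a - b^(2^e) :=
        (dvd_pow_self (2:ℤ) (by omega : n ≠ 0)).trans hmod'.dvd
      have hea : Even a := by
        have hbe : Even (b^(2^e)) := Int.even_pow.mpr ⟨hodd, by positivity⟩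
        obtain ⟨c, hc⟩ := h2
        obtain ⟨d, hd⟩ := hbe
        exact ⟨c + d, by linarith⟩
      exact (Int.not_odd_iff_even.mpr hea) ha
    have h1 := odd_pow_cong e he b hbodd
    have hdvd : ((2:ℤ)^(e+2)) ∣ (2:ℤ)^n := pow_dvd_pow _ (by omega)
    exact ((hmod'.of_dvd hdvd).symm.trans h1)
  · intro ha1
    obtain ⟨x, hx⟩ := exists_pow_root e he n a ha1
    refine ⟨(x : ZMod (2^n)), ?_⟩
    rw [← Int.cast_pow, ZMod.intCast_eq_intCast_iff]
    simpa [Nat.cast_pow] using hx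
end
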